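/- Let ((a0,a1,a2,a3,a4),(p,q)) be a (T1,T3) P_VI lattice with a2(l,m) ≠ 0 for all (l,m) ∈ ℤ². Then u(l,m) = −p(l,m)·q(l,m)/a2(l,m) − 1 satisfies the discrete Volterra equation in product form. -/

import Mathlib

/-- The data of the sixth Painlevé equation at one lattice site: parameters
`a0,…,a4` and variables `p,q`. -/
structure PVIState where
  a0 : ℂ
  a1 : ℂ
  a2 : ℂ
  a3 : ℂ
  a4 : ℂ
  p : ℂ
  q : ℂ

/-- The Bäcklund transformation `T1` of P_VI, as a step relation between states
(including nonvanishing of all denominators occurring in the step formulas). -/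
noncomputable def PVI.T1Step (t : ℂ) (x y : PVIState) : Prop :=
  y.a0 = 1 - x.a1 - x.a2 ∧ y.a1 = 1 - x.a0 - x.a2 ∧ y.a2 = x.a2 - 1 ∧
  y.a3 = 1 - x.a2 - x.a4 ∧ y.a4 = 1 - x.a2 - x.a3 ∧
  x.q ≠ 0 ∧ 1 - x.q ≠ 0 ∧ t - x.q ≠ 0 ∧ y.p ≠ 0 ∧
  y.p = -((t - x.q) * (x.p * x.q - t * x.p + x.a1 + x.a2)) / ((1 - t) * t)
        - x.a4 * (t - x.q) / ((1 - t) * x.q)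
        - x.a3 * (t - x.q) / (t * (1 - x.q)) ∧
  y.q = (t * (y.p - x.a2 + 1) + (x.a2 - 1 - t * y.p) * x.q) / ((t - x.q) * y.p)

/-- The Bäcklund transformation `T2` of P_VI, as a step relation between states
(including nonvanishing of all denominators occurring in the step formulas). -/
noncomputable def PVI.T2Step (t : ℂ) (x y : PVIState) : Prop :=
  y.a0 = 1 - x.a1 - x.a2 ∧ y.a1 = - x.a0 - x.a2 ∧ y.a2 = x.a2 ∧
  y.a3 = 1 - x.a2 - x.a4 ∧ y.a4 = - x.a2 - x.a3 ∧
  1 - x.q ≠ 0 ∧ t - x.q ≠ 0 ∧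
  (1 - x.q) * x.p - x.a2 + x.a0 * (1 - t) / (t - x.q) ≠ 0 ∧ y.q ≠ 0 ∧
  y.q = ((t - x.q) * x.p - x.a2 - x.a3 * (1 - t) / (1 - x.q)) /
        ((1 - x.q) * x.p - x.a2 + x.a0 * (1 - t) / (t - x.q)) ∧
  y.p = (t - x.q) * (x.p * x.q - x.p + x.a2) / ((1 - t) * y.q)

/-- The Bäcklund transformation `T3` of P_VI, as a step relation between states
(including nonvanishing of all denominators occurring in the step formulas). -/
noncomputable def PVI.T3Step (t : ℂ) (x y : PVIState) : Prop :=
  y.a0 = 1 - x.a1 - x.a2 ∧ y.a1 = - x.a0 - x.a2 ∧ y.a2 = x.a2 ∧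
  y.a3 = - x.a2 - x.a4 ∧ y.a4 = 1 - x.a2 - x.a3 ∧
  x.q ≠ 0 ∧ t - x.q ≠ 0 ∧
  x.p * x.q + x.a2 - (x.a2 + x.a4) * t / (t - x.q) ≠ 0 ∧
  x.p * x.q + x.a2 + x.a0 * t / (t - x.q) ≠ 0 ∧
  y.p = -(x.q * (x.p * x.q + x.a2) * (x.p * x.q + x.a2 + x.a0 * t / (t - x.q))) /
        (t * (x.p * x.q + x.a2 - (x.a2 + x.a4) * t / (t - x.q))) ∧
  y.q = t * (x.p * x.q - x.a0 - x.a4 + x.a0 * t / (t - x.q)) /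
        (x.q * (x.p * x.q + x.a2 + x.a0 * t / (t - x.q)))

/-- The Hamiltonian of the sixth Painlevé equation. -/
noncomputable def HVI (t : ℂ) (x : PVIState) : ℂ :=
  (1 / (t * (t - 1))) * (x.q * (x.q - 1) * (x.q - t) * x.p ^ 2
    + x.a2 * (x.a1 + x.a2) * (x.q - t)
    - (x.a4 * (x.q - 1) * (x.q - t) + x.a3 * x.q * (x.q - t)
        + (x.a0 - 1) * x.q * (x.q - 1)) * x.p)

set_option maxHeartbeats 1000000 in
private lemma PVI.key (t a0 a1 a2 a3 a4 p q pB qB pC qC pD qD : ℂ)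
    (ht0 : t ≠ 0) (ht1 : t ≠ 1)
    (hsum : a0 + a1 + 2 * a2 + a3 + a4 = 1)
    (hq0 : q ≠ 0) (hq1 : 1 - q ≠ 0) (hqt : t - q ≠ 0)
    (hpB : pB ≠ 0)
    (hepB : pB = -((t - q) * (p * q - t * p + a1 + a2)) / ((1 - t) * t)
        - a4 * (t - q) / ((1 - t) * q) - a3 * (t - q) / (t * (1 - q)))
    (heqB : qB = (t * (pB - a2 + 1) + (a2 - 1 - t * pB) * q) / ((t - q) * pB))
    (hd1 : p * q + a2 - (a2 + a4) * t / (t - q) ≠ 0)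
    (hd2 : p * q + a2 + a0 * t / (t - q) ≠ 0)
    (hepC : pC = -(q * (p * q + a2) * (p * q + a2 + a0 * t / (t - q))) /
        (t * (p * q + a2 - (a2 + a4) * t / (t - q))))
    (heqC : qC = t * (p * q - a0 - a4 + a0 * t / (t - q)) /
        (q * (p * q + a2 + a0 * t / (t - q))))
    (hs0 : qB ≠ 0) (hst : t - qB ≠ 0)
    (hd3 : pB * qB + (a2 - 1) - (a2 - 1 + (1 - a2 - a3)) * t / (t - qB) ≠ 0)
    (hd4 : pB * qB + (a2 - 1) + (1 - a1 - a2) * t / (t - qB) ≠ 0)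
    (hepD : pD = -(qB * (pB * qB + (a2 - 1)) * (pB * qB + (a2 - 1) + (1 - a1 - a2) * t / (t - qB))) /
        (t * (pB * qB + (a2 - 1) - (a2 - 1 + (1 - a2 - a3)) * t / (t - qB))))
    (heqD : qD = t * (pB * qB - (1 - a1 - a2) - (1 - a2 - a3) + (1 - a1 - a2) * t / (t - qB)) /
        (qB * (pB * qB + (a2 - 1) + (1 - a1 - a2) * t / (t - qB))))
    (ha2 : a2 ≠ 0) (ha2' : a2 - 1 ≠ 0) :
    (-(pD * qD) / (a2 - 1) - 1) * (1 + (-(pC * qC) / a2 - 1)) =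
      (-(p * q) / a2 - 1) * (1 + (-(pB * qB) / (a2 - 1) - 1)) := by
  obtain rfl : a1 = 1 - a0 - 2*a2 - a3 - a4 := by linear_combination hsum
  have ht1' : (1:ℂ) - t ≠ 0 := sub_ne_zero_of_ne (Ne.symm ht1)
  have hN1 : pB * ((1 - t) * t * q * (1 - q)) = (-((t - q) * (p * q - t * p + (1 - a0 - 2*a2 - a3 - a4) + a2)) * (q * (1 - q)) - a4 * (t - q) * (t * (1 - q)) - a3 * (t - q) * ((1 - t) * q)) := by
    rw [hepB]; field_simp
  have hgp : pB * qB * (t - q) = (t * (1 - q) * pB - (a2 - 1) * (t - q)) := by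
    rw [heqB]; field_simp; ring
  have hgv : pB * qB = (t * (1 - q) * pB - (a2 - 1) * (t - q)) / (t - q) := by rw [eq_div_iff hqt]; exact hgp
  have hqBv : qB = (t * (1 - q) * pB - (a2 - 1) * (t - q)) / ((t - q) * pB) := by
    rw [eq_div_iff (mul_ne_zero hqt hpB)]; linear_combination hgp
  -- C site
  have e1 : p * q + a2 - (a2 + a4) * t / (t - q) = ((p * q + a2) * (t - q) - (a2 + a4) * t) / (t - q) := by
    field_simp
  have e2 : p * q + a2 + a0 * t / (t - q) = ((p * q + a2) * (t - q) + a0 * t) / (t - q) := by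
    field_simp
  have hd1' : ((p * q + a2) * (t - q) - (a2 + a4) * t) ≠ 0 := fun h => hd1 (by rw [e1, h, zero_div])
  have hd2' : (p * q + a2) * (t - q) + a0 * t ≠ 0 := fun h => hd2 (by rw [e2, h, zero_div])
  rw [e1, e2] at hepC
  rw [e2] at heqC
  have hhv : pC * qC = -((p * q + a2) * ((p * q - a0 - a4) * (t - q) + a0 * t)) / ((p * q + a2) * (t - q) - (a2 + a4) * t) := by
    rw [eq_div_iff hd1', hepC, heqC]
    generalize (p * q + a2) * (t - q) + a0 * t = N at hd2' ⊢
    generalize (p * q + a2) * (t - q) - (a2 + a4) * t = D at hd1' ⊢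
    field_simp
  -- D site
  have e3 : pB * qB + (a2 - 1) - (a2 - 1 + (1 - a2 - a3)) * t / (t - qB)
      = ((pB * qB + (a2 - 1)) * (t - qB) + a3 * t) / (t - qB) := by
    field_simp; ring
  have e4 : pB * qB + (a2 - 1) + (1 - (1 - a0 - 2*a2 - a3 - a4) - a2) * t / (t - qB)
      = ((pB * qB + (a2 - 1)) * (t - qB) + (1 - (1 - a0 - 2*a2 - a3 - a4) - a2) * t) / (t - qB) := by
    field_simp
  have hd3' : (pB * qB + (a2 - 1)) * (t - qB) + a3 * t ≠ 0 :=
    fun h => hd3 (by rw [e3, h, zero_div])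
  have hd4' : (pB * qB + (a2 - 1)) * (t - qB) + (1 - (1 - a0 - 2*a2 - a3 - a4) - a2) * t ≠ 0 :=
    fun h => hd4 (by rw [e4, h, zero_div])
  rw [e3, e4] at hepD
  rw [e4] at heqD
  have hkv : pD * qD = -((pB * qB + (a2 - 1)) * ((pB * qB - (1 - (1 - a0 - 2*a2 - a3 - a4) - a2) - (1 - a2 - a3)) * (t - qB) + (1 - (1 - a0 - 2*a2 - a3 - a4) - a2) * t)) /
      ((pB * qB + (a2 - 1)) * (t - qB) + a3 * t) := by
    rw [eq_div_iff hd3', hepD, heqD]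
    generalize (pB * qB + (a2 - 1)) * (t - qB) + (1 - (1 - a0 - 2*a2 - a3 - a4) - a2) * t = N at hd4' ⊢
    generalize (pB * qB + (a2 - 1)) * (t - qB) + a3 * t = D at hd3' ⊢
    field_simp
  -- lift D relation to base variables
  rw [hgv, hqBv] at hkv hd3'
  have eKD : ((t * (1 - q) * pB - (a2 - 1) * (t - q)) / (t - q) + (a2 - 1)) * (t - (t * (1 - q) * pB - (a2 - 1) * (t - q)) / ((t - q) * pB)) + a3 * t
      = (((t * (1 - q) * pB - (a2 - 1) * (t - q)) + (a2 - 1) * (t - q)) * (t * (t - q) * pB - (t * (1 - q) * pB - (a2 - 1) * (t - q))) + a3 * t * ((t - q) * ((t - q) * pB))) / ((t - q) * ((t - q) * pB)) := by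
    field_simp
  have hkdne : (((t * (1 - q) * pB - (a2 - 1) * (t - q)) + (a2 - 1) * (t - q)) * (t * (t - q) * pB - (t * (1 - q) * pB - (a2 - 1) * (t - q))) + a3 * t * ((t - q) * ((t - q) * pB))) ≠ 0 := fun h => hd3' (by rw [eKD, h, zero_div])
  have eKN : -(((t * (1 - q) * pB - (a2 - 1) * (t - q)) / (t - q) + (a2 - 1)) * (((t * (1 - q) * pB - (a2 - 1) * (t - q)) / (t - q) - (1 - (1 - a0 - 2*a2 - a3 - a4) - a2) - (1 - a2 - a3)) * (t - (t * (1 - q) * pB - (a2 - 1) * (t - q)) / ((t - q) * pB)) + (1 - (1 - a0 - 2*a2 - a3 - a4) - a2) * t))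
      = -(((t * (1 - q) * pB - (a2 - 1) * (t - q)) + (a2 - 1) * (t - q)) * (((t * (1 - q) * pB - (a2 - 1) * (t - q)) - ((1 - (1 - a0 - 2*a2 - a3 - a4) - a2) + (1 - a2 - a3)) * (t - q)) * (t * (t - q) * pB - (t * (1 - q) * pB - (a2 - 1) * (t - q))) + (1 - (1 - a0 - 2*a2 - a3 - a4) - a2) * t * ((t - q) * ((t - q) * pB)))) / ((t - q) * ((t - q) * ((t - q) * pB))) := by
    field_simp
    try ring
    try tauto
  have hkA : pD * qD = -(((t * (1 - q) * pB - (a2 - 1) * (t - q)) + (a2 - 1) * (t - q)) * (((t * (1 - q) * pB - (a2 - 1) * (t - q)) - ((1 - (1 - a0 - 2*a2 - a3 - a4) - a2) + (1 - a2 - a3)) * (t - q)) * (t * (t - q) * pB - (t * (1 - q) * pB - (a2 - 1) * (t - q))) + (1 - (1 - a0 - 2*a2 - a3 - a4) - a2) * t * ((t - q) * ((t - q) * pB)))) / ((t - q) * (((t * (1 - q) * pB - (a2 - 1) * (t - q)) + (a2 - 1) * (t - q)) * (t * (t - q) * pB - (t * (1 - q) * pB - (a2 - 1) * (t - q))) +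 a3 * t * ((t - q) * ((t - q) * pB)))) := by
    rw [hkv, eKD, eKN, div_div_div_eq]
    rw [div_eq_div_iff
      (mul_ne_zero (mul_ne_zero hqt (mul_ne_zero hqt (mul_ne_zero hqt hpB))) hkdne)
      (mul_ne_zero hqt hkdne)]
    ring
  -- the key identity
  have key : (pD * qD + (a2 - 1)) * (pC * qC) = (p * q + a2) * (pB * qB) := by
    rw [hkA, hhv, hgv]
    rw [div_add' _ _ _ (mul_ne_zero hqt hkdne), div_mul_div_comm, ← mul_div_assoc,
      div_eq_div_iff (mul_ne_zero (mul_ne_zero hqt hkdne) hd1') hqt]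
    linear_combination ((t - q) * ((p * q + a2) * (a0 + a2 + a4) * t * pB * ((q - t) * (1 - a2) - t * (1 - q) * pB))) * hN1
  field_simp
  linear_combination key

/-- Special solution of the discrete Volterra equation (product form) from a
(T1,T3) P_VI Bäcklund lattice. -/
theorem dVolterra_solution_from_PVI_T1T3_lattice
    (t : ℂ) (ht0 : t ≠ 0) (ht1 : t ≠ 1)
    (x : ℤ → ℤ → PVIState)
    (hsum : ∀ l m : ℤ,
      (x l m).a0 + (x l m).a1 + 2 * (x l m).a2 + (x l m).a3 + (x l m).a4 = 1)
    (hT1 : ∀ l m : ℤ, PVI.T1Step t (x l m) (x (l+1) m))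
    (hT3 : ∀ l m : ℤ, PVI.T3Step t (x l m) (x l (m+1)))
    (ha2 : ∀ l m : ℤ, (x l m).a2 ≠ 0)
    (u : ℤ → ℤ → ℂ)
    (hu : ∀ l m : ℤ, u l m = -((x l m).p * (x l m).q) / (x l m).a2 - 1) :
    ∀ l m : ℤ, u (l+1) (m+1) * (1 + u l (m+1)) = u l m * (1 + u (l+1) m) := by
  intro l m
  obtain ⟨hB0, hB1, hB2, hB3, hB4, hq0, hq1, hqt, hpB, hepB, heqB⟩ := hT1 l m
  obtain ⟨hC0, hC1, hC2, hC3, hC4, hq0', hqt', hdc1, hdc2, hepC, heqC⟩ := hT3 l m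
  obtain ⟨hD0, hD1, hD2, hD3, hD4, hs0, hst, hdd3, hdd4, hepD, heqD⟩ := hT3 (l+1) m
  have ha2B : (x (l+1) m).a2 ≠ 0 := ha2 (l+1) m
  rw [hB2] at ha2B
  rw [hB2, hB4] at hdd3
  rw [hB0, hB2] at hdd4
  rw [hB0, hB2, hB4] at hepD
  rw [hB0, hB2, hB4] at heqD
  rw [hu (l+1) (m+1), hu l (m+1), hu l m, hu (l+1) m, hD2, hB2, hC2]
  exact PVI.key t (x l m).a0 (x l m).a1 (x l m).a2 (x l m).a3 (x l m).a4
    (x l m).p (x l m).q (x (l+1) m).p (x (l+1) m).q (x l (m+1)).p (x l (m+1)).q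
    (x (l+1) (m+1)).p (x (l+1) (m+1)).q
    ht0 ht1 (hsum l m) hq0 hq1 hqt hpB hepB heqB hdc1 hdc2 hepC heqC
    hs0 hst hdd3 hdd4 hepD heqD (ha2 l m) ha2B
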